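/- Let r, M > 0 and let (f_n)_{n≥0} be a sequence of functions f_n : ℂ → ℂ, each complex-differentiable on the open disk Δ_r = {z ∈ ℂ : |z| < r} and satisfying |f_n(z)| ≤ M for all z ∈ Δ_r. Suppose that for every integer m ≥ 0 there exists a_m ∈ ℂ such that the m-th derivatives satisfy f_n^{(m)}(0) → a_m as n → ∞. Then there exists a function f : ℂ → ℂ, complex-differentiable on Δ_r with |f(z)| ≤ M on Δ_r, such that: f_n(z) → f(z) for every z ∈ Δ_r; the convergence f_n → f is uniform on every compact subset of Δ_r; and f^{(m)}(0) = a_m for every m ≥ 0. -/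

import Mathlib

open Filter Metric Complex Topology

/-- Cauchy estimate on a closed disk. -/
lemma vm_cauchy_est {f : ℂ → ℂ} {M : ℝ} {s : NNReal} (hs : 0 < s)
    (hf : DifferentiableOn ℂ f (Metric.closedBall 0 s))
    (hb : ∀ z ∈ Metric.closedBall (0 : ℂ) s, ‖f z‖ ≤ M) (m : ℕ) :
    ‖iteratedDeriv m f 0‖ ≤ (Nat.factorial m : ℝ) * M / (s : ℝ) ^ m := by
  have hs0 : (0 : ℝ) < (s : ℝ) := hs
  have hM0 : (0 : ℝ) ≤ M := le_trans (norm_nonneg _) (hb 0 (by simp [hs0.le]))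
  have h := hf.hasFPowerSeriesOnBall hs
  have h1 : iteratedDeriv m f 0 = Nat.factorial m • (cauchyPowerSeries f 0 s m fun _ => (1 : ℂ)) := by
    rw [iteratedDeriv_eq_iteratedFDeriv, ← h.factorial_smul 1 m]
  have h2 : ‖cauchyPowerSeries f 0 s m fun _ => (1 : ℂ)‖ ≤ ‖cauchyPowerSeries f 0 s m‖ := by
    have := (cauchyPowerSeries f 0 s m).le_opNorm fun _ => (1 : ℂ)
    simpa using this
  have hint : (∫ θ : ℝ in (0)..2 * Real.pi, ‖f (circleMap 0 s θ)‖) ≤ 2 * Real.pi * M := by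
    have hcont : Continuous fun θ : ℝ => ‖f (circleMap 0 s θ)‖ := by
      apply Continuous.norm
      apply hf.continuousOn.comp_continuous (continuous_circleMap 0 s)
      intro θ
      simp [Metric.mem_closedBall, Complex.dist_eq, norm_circleMap_zero, _root_.abs_of_nonneg hs0.le]
    calc (∫ θ : ℝ in (0)..2 * Real.pi, ‖f (circleMap 0 s θ)‖)
        ≤ ∫ _ : ℝ in (0)..2 * Real.pi, M := by
          apply intervalIntegral.integral_mono_on Real.two_pi_pos.le
            (hcont.intervalIntegrable _ _) (intervalIntegrable_const)
          intro θ _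
          apply hb
          simp [Metric.mem_closedBall, Complex.dist_eq, norm_circleMap_zero, _root_.abs_of_nonneg hs0.le]
      _ = 2 * Real.pi * M := by simp [mul_comm]
  have h3 : ‖cauchyPowerSeries f 0 s m‖ ≤ M * ((s : ℝ)⁻¹) ^ m := by
    refine le_trans (norm_cauchyPowerSeries_le f 0 s m) ?_
    have : (2 * Real.pi)⁻¹ * (∫ θ : ℝ in (0)..2 * Real.pi, ‖f (circleMap 0 s θ)‖) ≤ M := by
      rw [inv_mul_le_iff₀ Real.two_pi_pos]
      linarith [hint]
    have habs : |(s : ℝ)|⁻¹ = (s : ℝ)⁻¹ := by rw [_root_.abs_of_nonneg hs0.le]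
    rw [habs]
    exact mul_le_mul_of_nonneg_right this (by positivity)
  calc ‖iteratedDeriv m f 0‖ = (Nat.factorial m : ℝ) * ‖cauchyPowerSeries f 0 s m fun _ => (1 : ℂ)‖ := by
        rw [h1, nsmul_eq_mul, norm_mul, Complex.norm_natCast]
    _ ≤ (Nat.factorial m : ℝ) * (M * ((s : ℝ)⁻¹) ^ m) := by
        apply mul_le_mul_of_nonneg_left (le_trans h2 h3) (by positivity)
    _ = (Nat.factorial m : ℝ) * M / (s : ℝ) ^ m := by rw [inv_pow]; ring

open Filter Metric Complex Topology

lemma vm_coeff_bound {f : ℂ → ℂ} {r M : ℝ} (hr : 0 < r)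
    (hf : DifferentiableOn ℂ f (Metric.ball 0 r))
    (hb : ∀ z ∈ Metric.ball (0 : ℂ) r, ‖f z‖ ≤ M) (m : ℕ) :
    ‖iteratedDeriv m f 0‖ ≤ (Nat.factorial m : ℝ) * M / r ^ m := by
  have key : ∀ s ∈ Set.Ioo (0 : ℝ) r,
      ‖iteratedDeriv m f 0‖ ≤ (Nat.factorial m : ℝ) * M / s ^ m := by
    intro s hs
    have hsub : Metric.closedBall (0 : ℂ) s ⊆ Metric.ball 0 r :=
      Metric.closedBall_subset_ball hs.2
    have := vm_cauchy_est (s := ⟨s, hs.1.le⟩) (by exact_mod_cast hs.1)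
      (hf.mono hsub) (fun z hz => hb z (hsub hz)) m
    exact this
  have hne : (𝓝[<] r).NeBot := nhdsLT_neBot r
  apply ge_of_tendsto (f := fun s : ℝ => (Nat.factorial m : ℝ) * M / s ^ m) (x := 𝓝[<] r)
  · have hcont : Filter.Tendsto (fun s : ℝ => (Nat.factorial m : ℝ) * M / s ^ m)
        (nhds r) (nhds ((Nat.factorial m : ℝ) * M / r ^ m)) := by
      have : ContinuousAt (fun s : ℝ => (Nat.factorial m : ℝ) * M / s ^ m) r := by
        apply ContinuousAt.div continuousAt_const (by fun_prop)
        positivity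
      exact this
    exact hcont.mono_left nhdsWithin_le_nhds
  · have hmem : Set.Ioo (0 : ℝ) r ∈ 𝓝[<] r := by
      apply Ioo_mem_nhdsLT_of_mem
      exact ⟨hr, le_refl r⟩
    filter_upwards [hmem] with s hs using key s hs


/-- Vitali–Montel style lemma: Let `r, M > 0` and let `(f_n)` be a sequence of
functions `ℂ → ℂ`, each holomorphic on the open disk `Δ_r` and bounded by `M` there.
If for every `m ≥ 0` the derivatives `f_n^{(m)}(0)` converge to some `a_m`, then there is a
function `f`, holomorphic on `Δ_r` and bounded by `M`, such that `f_n → f` pointwise on `Δ_r`,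
uniformly on every compact subset of `Δ_r`, and `f^{(m)}(0) = a_m` for every `m`. -/
theorem vitali_montel (r M : ℝ) (hr : 0 < r) (hM : 0 < M) (f : ℕ → ℂ → ℂ)
    (hdiff : ∀ n : ℕ, DifferentiableOn ℂ (f n) (Metric.ball 0 r))
    (hbound : ∀ n : ℕ, ∀ z ∈ Metric.ball (0 : ℂ) r, ‖f n z‖ ≤ M)
    (a : ℕ → ℂ)
    (hconv : ∀ m : ℕ,
      Filter.Tendsto (fun n : ℕ => iteratedDeriv m (f n) 0) Filter.atTop (nhds (a m))) :
    ∃ g : ℂ → ℂ, DifferentiableOn ℂ g (Metric.ball 0 r) ∧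
      (∀ z ∈ Metric.ball (0 : ℂ) r, ‖g z‖ ≤ M) ∧
      (∀ z ∈ Metric.ball (0 : ℂ) r,
        Filter.Tendsto (fun n : ℕ => f n z) Filter.atTop (nhds (g z))) ∧
      (∀ K : Set ℂ, K ⊆ Metric.ball 0 r → IsCompact K →
        TendstoUniformlyOn f g Filter.atTop K) ∧
      (∀ m : ℕ, iteratedDeriv m g 0 = a m) := by
  have hM0 : (0 : ℝ) ≤ M := hM.le
  have hbound' : ∀ n : ℕ, ∀ z ∈ Metric.ball (0 : ℂ) r, ‖f n z‖ ≤ M := hbound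
  set b : ℕ → ℂ := fun m => (Nat.factorial m : ℂ)⁻¹ * a m with hb_def
  set c : ℕ → ℕ → ℂ := fun n m => (Nat.factorial m : ℂ)⁻¹ * iteratedDeriv m (f n) 0 with hc_def
  have hc_bound : ∀ n m, ‖c n m‖ ≤ M / r ^ m := by
    intro n m
    have h1 := vm_coeff_bound hr (hdiff n) (hbound' n) m
    have hfm : (0 : ℝ) < (Nat.factorial m : ℝ) := by positivity
    calc ‖c n m‖ = (Nat.factorial m : ℝ)⁻¹ * ‖iteratedDeriv m (f n) 0‖ := by
          simp [hc_def, norm_mul]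
      _ ≤ (Nat.factorial m : ℝ)⁻¹ * ((Nat.factorial m : ℝ) * M / r ^ m) := by
          exact mul_le_mul_of_nonneg_left h1 (by positivity)
      _ = M / r ^ m := by field_simp
  have hcb : ∀ m, Filter.Tendsto (fun n => c n m) Filter.atTop (nhds (b m)) := fun m =>
    Filter.Tendsto.const_mul _ (hconv m)
  have hb_bound : ∀ m, ‖b m‖ ≤ M / r ^ m := fun m =>
    le_of_tendsto (hcb m).norm (Filter.Eventually.of_forall fun n => hc_bound n m)
  have hdb_bound : ∀ n m, ‖c n m - b m‖ ≤ 2 * M / r ^ m := by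
    intro n m
    calc ‖c n m - b m‖ ≤ ‖c n m‖ + ‖b m‖ := norm_sub_le _ _
      _ ≤ M / r ^ m + M / r ^ m := add_le_add (hc_bound n m) (hb_bound m)
      _ = 2 * M / r ^ m := by ring
  set g : ℂ → ℂ := fun z => ∑' m, b m * z ^ m with hg_def
  have hsummable : ∀ z : ℂ, ‖z‖ < r → Summable (fun m => b m * z ^ m) := by
    intro z hz
    apply Summable.of_norm_bounded (g := fun m => M * (‖z‖ / r) ^ m)
    · exact (summable_geometric_of_lt_one (by positivity)
        (by rwa [div_lt_one hr])).mul_left M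
    · intro m
      calc ‖b m * z ^ m‖ = ‖b m‖ * ‖z‖ ^ m := by rw [norm_mul, norm_pow]
        _ ≤ (M / r ^ m) * ‖z‖ ^ m :=
            mul_le_mul_of_nonneg_right (hb_bound m) (by positivity)
        _ = M * (‖z‖ / r) ^ m := by rw [div_pow]; ring
  have hsum_g : ∀ z : ℂ, ‖z‖ < r → HasSum (fun m => b m * z ^ m) (g z) := fun z hz =>
    (hsummable z hz).hasSum
  have hsum_f : ∀ n, ∀ z ∈ Metric.ball (0 : ℂ) r,
      HasSum (fun m => c n m * z ^ m) (f n z) := by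
    intro n z hz
    have h := Complex.hasSum_taylorSeries_on_ball (hdiff n) hz
    convert h using 2 with m
    · rfl
    simp only [hc_def, smul_eq_mul, sub_zero]
    ring
  -- Uniform convergence on compact subsets
  have HUC : ∀ K : Set ℂ, K ⊆ Metric.ball 0 r → IsCompact K →
      TendstoUniformlyOn f g Filter.atTop K := by
    intro K hK hKc
    obtain ⟨ρ, hρ0, hρr, hρK⟩ : ∃ ρ, 0 ≤ ρ ∧ ρ < r ∧ ∀ z ∈ K, ‖z‖ ≤ ρ := by
      rcases K.eq_empty_or_nonempty with rfl | hne
      · exact ⟨0, le_refl 0, hr, by simp⟩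
      · obtain ⟨z0, hz0K, hz0⟩ := hKc.exists_isMaxOn hne continuous_norm.continuousOn
        refine ⟨‖z0‖, norm_nonneg _, ?_, hz0⟩
        simpa using mem_ball_zero_iff.mp (hK hz0K)
    set q : ℝ := ρ / r with hq_def
    have hq0 : 0 ≤ q := div_nonneg hρ0 hr.le
    have hq1 : q < 1 := by rw [hq_def, div_lt_one hr]; exact hρr
    rw [Metric.tendstoUniformlyOn_iff]
    intro ε hε
    have htail : Filter.Tendsto (fun N : ℕ => 2 * M / (1 - q) * q ^ N)
        Filter.atTop (nhds 0) := by
      simpa using (tendsto_pow_atTop_nhds_zero_of_lt_one hq0 hq1).const_mul (2 * M / (1 - q))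
    obtain ⟨N, hN⟩ := (htail.eventually_lt_const (half_pos hε)).exists
    have hfin : Filter.Tendsto
        (fun n => ∑ m ∈ Finset.range N, ‖c n m - b m‖ * ρ ^ m)
        Filter.atTop (nhds 0) := by
      have hterm : ∀ m : ℕ, Filter.Tendsto (fun n => ‖c n m - b m‖ * ρ ^ m)
          Filter.atTop (nhds 0) := by
        intro m
        have h0 : Filter.Tendsto (fun n => c n m - b m) Filter.atTop (nhds 0) := by
          simpa using (hcb m).sub_const (b m)
        simpa using h0.norm.mul_const (ρ ^ m)
      have := tendsto_finset_sum (Finset.range N) (fun m _ => hterm m)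
      simpa using this
    filter_upwards [hfin.eventually_lt_const (half_pos hε)] with n hn z hzK
    have hzρ : ‖z‖ ≤ ρ := hρK z hzK
    have hzr : ‖z‖ < r := lt_of_le_of_lt hzρ hρr
    set d : ℕ → ℂ := fun m => (c n m - b m) * z ^ m with hd_def
    have hdb : ∀ m, ‖d m‖ ≤ 2 * M * q ^ m := by
      intro m
      calc ‖d m‖ = ‖c n m - b m‖ * ‖z‖ ^ m := by rw [hd_def, norm_mul, norm_pow]
        _ ≤ (2 * M / r ^ m) * ρ ^ m := by
            apply mul_le_mul (hdb_bound n m) (pow_le_pow_left₀ (norm_nonneg z) hzρ m)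
              (by positivity) (by positivity)
        _ = 2 * M * q ^ m := by rw [hq_def, div_pow]; ring
    have hgeo : Summable (fun m : ℕ => 2 * M * q ^ m) :=
      (summable_geometric_of_lt_one hq0 hq1).mul_left (2 * M)
    have hd_sum : Summable fun m => ‖d m‖ :=
      Summable.of_nonneg_of_le (fun m => norm_nonneg _) hdb hgeo
    have hsum_diff : HasSum d (f n z - g z) := by
      have h1 := (hsum_f n z (mem_ball_zero_iff.mpr hzr)).sub (hsum_g z hzr)
      convert h1 using 1
      · rfl
      funext m
      rw [hd_def]
      ring
    have key : ‖f n z - g z‖ ≤ ∑' m, ‖d m‖ := by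
      rw [← hsum_diff.tsum_eq]
      exact norm_tsum_le_tsum_norm hd_sum
    have hsplit := Summable.sum_add_tsum_nat_add (f := fun m => ‖d m‖) N hd_sum
    have htail_le : (∑' i, ‖d (i + N)‖) ≤ 2 * M / (1 - q) * q ^ N := by
      have hterm : ∀ i, ‖d (i + N)‖ ≤ 2 * M * q ^ N * q ^ i := by
        intro i
        refine le_trans (hdb (i + N)) ?_
        rw [pow_add]
        ring_nf
        exact le_refl _
      have hs1 : Summable fun i => ‖d (i + N)‖ := (summable_nat_add_iff N).2 hd_sum
      have hs2 : Summable fun i : ℕ => 2 * M * q ^ N * q ^ i :=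
        (summable_geometric_of_lt_one hq0 hq1).mul_left _
      calc (∑' i, ‖d (i + N)‖) ≤ ∑' i : ℕ, 2 * M * q ^ N * q ^ i :=
            Summable.tsum_le_tsum hterm hs1 hs2
        _ = 2 * M * q ^ N * (1 - q)⁻¹ := by
            rw [tsum_mul_left, tsum_geometric_of_lt_one hq0 hq1]
        _ = 2 * M / (1 - q) * q ^ N := by
            rw [div_eq_mul_inv]; ring
    have hhead : (∑ m ∈ Finset.range N, ‖d m‖) ≤
        ∑ m ∈ Finset.range N, ‖c n m - b m‖ * ρ ^ m := by
      apply Finset.sum_le_sum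
      intro m _
      rw [hd_def, norm_mul, norm_pow]
      exact mul_le_mul_of_nonneg_left (pow_le_pow_left₀ (norm_nonneg z) hzρ m)
        (norm_nonneg _)
    have hlt : ‖f n z - g z‖ < ε := by
      calc ‖f n z - g z‖ ≤ ∑' m, ‖d m‖ := key
        _ = (∑ m ∈ Finset.range N, ‖d m‖) + ∑' i, ‖d (i + N)‖ := hsplit.symm
        _ < ε / 2 + ε / 2 :=
            add_lt_add_of_le_of_lt
              (le_trans hhead hn.le)
              (lt_of_le_of_lt htail_le hN)
        _ = ε := add_halves ε
    rw [dist_eq_norm, norm_sub_rev]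
    exact hlt
  -- pointwise convergence
  have Hpt : ∀ z ∈ Metric.ball (0 : ℂ) r,
      Filter.Tendsto (fun n => f n z) Filter.atTop (nhds (g z)) := by
    intro z hz
    have h := HUC {z} (by simpa using hz) isCompact_singleton
    exact h.tendsto_at (Set.mem_singleton z)
  -- differentiability
  have HTLU : TendstoLocallyUniformlyOn f g Filter.atTop (Metric.ball 0 r) := by
    rw [tendstoLocallyUniformlyOn_iff_forall_isCompact Metric.isOpen_ball]
    exact fun K hK hKc => HUC K hK hKc
  have hgdiff : DifferentiableOn ℂ g (Metric.ball 0 r) :=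
    HTLU.differentiableOn (Filter.Eventually.of_forall hdiff) Metric.isOpen_ball
  have hgbound : ∀ z ∈ Metric.ball (0 : ℂ) r, ‖g z‖ ≤ M := by
    intro z hz
    exact le_of_tendsto (Hpt z hz).norm
      (Filter.Eventually.of_forall fun n => hbound' n z hz)
  -- power series for g and iterated derivatives
  have hps : HasFPowerSeriesOnBall g (FormalMultilinearSeries.ofScalars ℂ b) 0
      (ENNReal.ofReal r) := by
    constructor
    · rw [ENNReal.ofReal]
      apply FormalMultilinearSeries.le_radius_of_bound _ M
      intro n
      have h1 : ‖FormalMultilinearSeries.ofScalars ℂ b n‖ = ‖b n‖ :=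
        FormalMultilinearSeries.ofScalars_norm ℂ b n
      rw [h1]
      have h2 : ((r.toNNReal : ℝ)) = r := Real.coe_toNNReal r hr.le
      rw [h2]
      calc ‖b n‖ * r ^ n ≤ (M / r ^ n) * r ^ n :=
            mul_le_mul_of_nonneg_right (hb_bound n) (by positivity)
        _ = M := by field_simp
    · exact ENNReal.ofReal_pos.mpr hr
    · intro y hy
      have hy' : ‖y‖ < r := by
        rw [Metric.emetric_ball] at hy
        simpa using mem_ball_zero_iff.mp hy
      have h := hsum_g y hy'
      rw [zero_add]
      convert h using 2 with m
      · rfl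
      rw [FormalMultilinearSeries.ofScalars_apply_eq]
      simp [smul_eq_mul]
  have hiter : ∀ m : ℕ, iteratedDeriv m g 0 = a m := by
    intro m
    rw [iteratedDeriv_eq_iteratedFDeriv, ← hps.factorial_smul 1 m]
    rw [FormalMultilinearSeries.ofScalars_apply_eq]
    have hfm : (Nat.factorial m : ℂ) ≠ 0 := by
      exact_mod_cast Nat.factorial_ne_zero m
    simp only [one_pow, smul_eq_mul, mul_one, nsmul_eq_mul, hb_def]
    field_simp
  exact ⟨g, hgdiff, hgbound, Hpt, HUC, hiter⟩
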